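/- For all reals a > 0 and b > 0: (1/B(a,b)) ∫₀¹ ( −x log x − (1−x) log(1−x) ) x^{a−1} (1−x)^{b−1} dx = ψ₀(a+b+1) − (a/(a+b)) ψ₀(a+1) − (b/(a+b)) ψ₀(b+1). That is, the expected binary entropy of a Beta(a,b) random variable equals ψ₀(a+b+1) − (a/(a+b)) ψ₀(a+1) − (b/(a+b)) ψ₀(b+1). -/

import Mathlib

open MeasureTheory Real

/-- The digamma function `ψ₀(x) = d/dx log Γ(x)`. -/
noncomputable def digamma (x : ℝ) : ℝ := deriv (fun y => Real.log (Real.Gamma y)) x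

/-- The Beta function `B(a,b) = Γ(a)Γ(b)/Γ(a+b)`. -/
noncomputable def betaFn (a b : ℝ) : ℝ := Real.Gamma a * Real.Gamma b / Real.Gamma (a + b)

/- ### Auxiliary lemmas -/

lemma complex_eq_real_on_Ioo {u v : ℝ} {x : ℝ} (hx : x ∈ Set.Ioo (0:ℝ) 1) :
    (x:ℂ) ^ ((u:ℂ) - 1) * ((1:ℂ) - x) ^ ((v:ℂ) - 1)
      = ((x ^ (u - 1) * (1 - x) ^ (v - 1) : ℝ) : ℂ) := by
  obtain ⟨h0, h1⟩ := hx
  rw [Complex.ofReal_mul, Complex.ofReal_cpow h0.le, Complex.ofReal_cpow (by linarith)]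
  push_cast
  ring

lemma betaIntegrableOn {u v : ℝ} (hu : 0 < u) (hv : 0 < v) :
    IntegrableOn (fun x : ℝ => x ^ (u - 1) * (1 - x) ^ (v - 1)) (Set.Ioo 0 1) := by
  have h := Complex.betaIntegral_convergent (u := u) (v := v) (by simpa) (by simpa)
  rw [intervalIntegrable_iff_integrableOn_Ioc_of_le zero_le_one] at h
  have h2 := (h.mono_set Set.Ioo_subset_Ioc_self).norm
  refine h2.congr (((ae_restrict_iff' measurableSet_Ioo).2 (ae_of_all _ fun x hx => ?_)))
  simp only [complex_eq_real_on_Ioo hx, Complex.norm_real]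
  exact Real.norm_of_nonneg (mul_nonneg (Real.rpow_nonneg hx.1.le _)
    (Real.rpow_nonneg (by linarith [hx.2] : (0:ℝ) ≤ 1 - x) _))

lemma betaIntegral_eq {u v : ℝ} (hu : 0 < u) (hv : 0 < v) :
    ∫ x in Set.Ioo (0:ℝ) 1, x ^ (u - 1) * (1 - x) ^ (v - 1) = betaFn u v := by
  have h := Complex.Gamma_mul_Gamma_eq_betaIntegral (s := u) (t := v) (by simpa) (by simpa)
  rw [Complex.betaIntegral, intervalIntegral.integral_of_le zero_le_one,
    ← Measure.restrict_congr_set Ioo_ae_eq_Ioc,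
    setIntegral_congr_fun measurableSet_Ioo (fun x hx => complex_eq_real_on_Ioo hx)] at h
  have hre : ∫ x in Set.Ioo (0:ℝ) 1, ((x ^ (u - 1) * (1 - x) ^ (v - 1) : ℝ) : ℂ)
      = ((∫ x in Set.Ioo (0:ℝ) 1, x ^ (u - 1) * (1 - x) ^ (v - 1) : ℝ) : ℂ) :=
    integral_ofReal
  rw [hre] at h
  have hg : (0:ℝ) < Real.Gamma (u + v) := Real.Gamma_pos_of_pos (by linarith)
  rw [show ((u:ℂ)+v) = ((u+v:ℝ):ℂ) by push_cast; ring, Complex.Gamma_ofReal,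
    Complex.Gamma_ofReal, Complex.Gamma_ofReal, ← Complex.ofReal_mul, ← Complex.ofReal_mul,
    Complex.ofReal_inj] at h
  rw [betaFn, h, mul_comm, mul_div_assoc, div_self hg.ne', mul_one]

lemma abs_log_le {x ε : ℝ} (hx : 0 < x) (hx1 : x ≤ 1) (hε : 0 < ε) :
    |Real.log x| ≤ ε⁻¹ * x ^ (-ε) := by
  have hlog : Real.log x ≤ 0 := Real.log_nonpos hx.le hx1
  rw [abs_of_nonpos hlog]
  have h1 : Real.log (x ^ (-ε)) ≤ x ^ (-ε) - 1 :=
    Real.log_le_sub_one_of_pos (Real.rpow_pos_of_pos hx _)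
  rw [Real.log_rpow hx] at h1
  have h3 : ε * -Real.log x ≤ x ^ (-ε) - 1 := by nlinarith
  have h4 := mul_le_mul_of_nonneg_left h3 (le_of_lt (inv_pos.2 hε))
  rw [← mul_assoc, inv_mul_cancel₀ hε.ne', one_mul] at h4
  nlinarith [Real.rpow_pos_of_pos hx (-ε), inv_pos.2 hε]

lemma contOnBeta (u v : ℝ) :
    ContinuousOn (fun x : ℝ => x ^ (u - 1) * (1 - x) ^ (v - 1)) (Set.Ioo 0 1) := by
  apply ContinuousOn.mul
  · exact continuousOn_id.rpow_const (fun x hx => Or.inl hx.1.ne')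
  · exact (continuousOn_const.sub continuousOn_id).rpow_const
      (fun x hx => Or.inl (sub_ne_zero.mpr hx.2.ne'))

lemma measBeta (u v : ℝ) :
    AEStronglyMeasurable (fun x : ℝ => x ^ (u - 1) * (1 - x) ^ (v - 1))
      (volume.restrict (Set.Ioo 0 1)) :=
  (contOnBeta u v).aestronglyMeasurable measurableSet_Ioo

lemma measLogBeta (u v : ℝ) :
    AEStronglyMeasurable (fun x : ℝ => Real.log x * (x ^ (u - 1) * (1 - x) ^ (v - 1)))
      (volume.restrict (Set.Ioo 0 1)) := by
  refine ContinuousOn.aestronglyMeasurable ?_ measurableSet_Ioo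
  exact (Real.continuousOn_log.mono (fun x hx => by simp; exact hx.1.ne')).mul (contOnBeta u v)

lemma hasDerivAt_betaIntegral {a b : ℝ} (ha : 0 < a) (hb : 0 < b) :
    IntegrableOn (fun x : ℝ => Real.log x * (x ^ (a - 1) * (1 - x) ^ (b - 1))) (Set.Ioo 0 1) ∧
    HasDerivAt (fun u : ℝ => ∫ x in Set.Ioo (0:ℝ) 1, x ^ (u - 1) * (1 - x) ^ (b - 1))
      (∫ x in Set.Ioo (0:ℝ) 1, Real.log x * (x ^ (a - 1) * (1 - x) ^ (b - 1))) a := by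
  have key := hasDerivAt_integral_of_dominated_loc_of_deriv_le
    (μ := volume.restrict (Set.Ioo (0:ℝ) 1))
    (F := fun u x => x ^ (u - 1) * (1 - x) ^ (b - 1))
    (F' := fun u x => Real.log x * (x ^ (u - 1) * (1 - x) ^ (b - 1)))
    (x₀ := a)
    (bound := fun x => (a/4)⁻¹ * (x ^ (a/2 - 1) * (1 - x) ^ (b - 1)))
    (Metric.ball_mem_nhds a (show (0:ℝ) < a/4 by linarith))
    (Filter.Eventually.of_forall fun u => measBeta u b)
    (betaIntegrableOn ha hb)
    (measLogBeta a b)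
    ?_ ?_ ?_
  · exact key
  · rw [ae_restrict_iff' measurableSet_Ioo]
    refine ae_of_all _ fun x hx u hu => ?_
    obtain ⟨hx0, hx1⟩ := hx
    have h1x : (0:ℝ) < 1 - x := by linarith
    have hxp : ∀ p : ℝ, (0:ℝ) ≤ x ^ p := fun p => (Real.rpow_pos_of_pos hx0 p).le
    rw [Real.norm_eq_abs, abs_mul, abs_mul, abs_of_nonneg (hxp _),
      abs_of_nonneg (Real.rpow_pos_of_pos h1x _).le]
    have hu' : a - a/4 - 1 ≤ u - 1 := by
      rw [Metric.mem_ball, Real.dist_eq, abs_lt] at hu; linarith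
    have h2 : x ^ (u - 1) ≤ x ^ (a - a/4 - 1) :=
      Real.rpow_le_rpow_of_exponent_ge hx0 hx1.le hu'
    have h3 : |Real.log x| ≤ (a/4)⁻¹ * x ^ (-(a/4)) := abs_log_le hx0 hx1.le (by linarith)
    calc |Real.log x| * (x ^ (u - 1) * (1 - x) ^ (b - 1))
        ≤ ((a/4)⁻¹ * x ^ (-(a/4))) * (x ^ (a - a/4 - 1) * (1 - x) ^ (b - 1)) := by
          apply mul_le_mul h3 (mul_le_mul_of_nonneg_right h2 (Real.rpow_pos_of_pos h1x _).le)
            (by positivity) (by positivity)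
      _ = (a/4)⁻¹ * (x ^ (a/2 - 1) * (1 - x) ^ (b - 1)) := by
          rw [show x ^ (a/2 - 1) = x ^ (-(a/4)) * x ^ (a - a/4 - 1) by
            rw [← Real.rpow_add hx0]; ring_nf]
          ring
  · exact (betaIntegrableOn (by linarith : (0:ℝ) < a/2) hb).const_mul _
  · rw [ae_restrict_iff' measurableSet_Ioo]
    refine ae_of_all _ fun x hx u _ => ?_
    have h := ((Real.hasStrictDerivAt_const_rpow hx.1 (u - 1)).hasDerivAt.comp u
      ((hasDerivAt_id u).sub_const 1)).mul_const ((1 - x) ^ (b - 1))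
    refine h.congr_deriv ?_
    ring

lemma ne_neg_nat {x : ℝ} (hx : 0 < x) : ∀ m : ℕ, x ≠ -m := fun m h => by
  have : (0:ℝ) ≤ (m:ℝ) := Nat.cast_nonneg m
  rw [h] at hx; linarith

lemma hasDerivAt_Gamma {x : ℝ} (hx : 0 < x) :
    HasDerivAt Real.Gamma (deriv Real.Gamma x) x :=
  (Real.differentiableAt_Gamma (ne_neg_nat hx)).hasDerivAt

lemma digamma_eq {x : ℝ} (hx : 0 < x) :
    digamma x = deriv Real.Gamma x / Real.Gamma x :=
  ((hasDerivAt_Gamma hx).log (Real.Gamma_pos_of_pos hx).ne').deriv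

lemma hasDerivAt_betaFn_left {a b : ℝ} (ha : 0 < a) (hb : 0 < b) :
    HasDerivAt (fun u => betaFn u b) (betaFn a b * (digamma a - digamma (a + b))) a := by
  have hab : (0:ℝ) < a + b := by linarith
  have hΓa := Real.Gamma_pos_of_pos ha
  have hΓb := Real.Gamma_pos_of_pos hb
  have hΓab := Real.Gamma_pos_of_pos hab
  have h2 : HasDerivAt (fun u : ℝ => Real.Gamma (u + b)) (deriv Real.Gamma (a + b)) a := by
    have := (hasDerivAt_Gamma hab).comp a ((hasDerivAt_id a).add_const b)
    exact this.congr_deriv (mul_one _)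
  have h3 := ((hasDerivAt_Gamma ha).mul_const (Real.Gamma b)).div h2 hΓab.ne'
  refine h3.congr_deriv ?_
  rw [digamma_eq ha, digamma_eq hab, betaFn]
  field_simp

/-- The key identity: `∫ log x · x^(a-1)(1-x)^(b-1) = B(a,b)(ψ(a) − ψ(a+b))`. -/
lemma logBeta_integral_eq {a b : ℝ} (ha : 0 < a) (hb : 0 < b) :
    ∫ x in Set.Ioo (0:ℝ) 1, Real.log x * (x ^ (a - 1) * (1 - x) ^ (b - 1))
      = betaFn a b * (digamma a - digamma (a + b)) := by
  have hD := (hasDerivAt_betaIntegral ha hb).2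
  have hB := hasDerivAt_betaFn_left ha hb
  have heq : (fun u : ℝ => ∫ x in Set.Ioo (0:ℝ) 1, x ^ (u - 1) * (1 - x) ^ (b - 1))
      =ᶠ[nhds a] (fun u => betaFn u b) := by
    filter_upwards [eventually_gt_nhds ha] with u hu
    exact betaIntegral_eq hu hb
  have hD' : HasDerivAt (fun u => betaFn u b)
      (∫ x in Set.Ioo (0:ℝ) 1, Real.log x * (x ^ (a - 1) * (1 - x) ^ (b - 1))) a :=
    hD.congr_of_eventuallyEq heq.symm
  exact hD'.unique hB

lemma reflect_indicator (f : ℝ → ℝ) (x : ℝ) :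
    Set.indicator (Set.Ioo (0:ℝ) 1) f (1 - x)
      = Set.indicator (Set.Ioo (0:ℝ) 1) (fun y => f (1 - y)) x := by
  by_cases hx : x ∈ Set.Ioo (0:ℝ) 1
  · have h1 : (1:ℝ) - x ∈ Set.Ioo (0:ℝ) 1 := ⟨by linarith [hx.2], by linarith [hx.1]⟩
    rw [Set.indicator_of_mem h1, Set.indicator_of_mem hx]
  · have h1 : (1:ℝ) - x ∉ Set.Ioo (0:ℝ) 1 := by
      simp only [Set.mem_Ioo, not_and_or, not_lt] at hx ⊢
      rcases hx with h | h
      · right; linarith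
      · left; linarith
    rw [Set.indicator_of_notMem h1, Set.indicator_of_notMem hx]

lemma integral_reflect (f : ℝ → ℝ) :
    ∫ x in Set.Ioo (0:ℝ) 1, f (1 - x) = ∫ x in Set.Ioo (0:ℝ) 1, f x := by
  rw [← integral_indicator measurableSet_Ioo, ← integral_indicator measurableSet_Ioo]
  rw [← integral_sub_left_eq_self (Set.indicator (Set.Ioo (0:ℝ) 1) f) (μ := volume) 1]
  congr 1
  ext x
  exact (reflect_indicator f x).symm

lemma integrableOn_reflect {f : ℝ → ℝ} (hf : IntegrableOn f (Set.Ioo 0 1)) :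
    IntegrableOn (fun x => f (1 - x)) (Set.Ioo 0 1) := by
  rw [← integrable_indicator_iff measurableSet_Ioo] at hf
  rw [← integrable_indicator_iff measurableSet_Ioo]
  have h := hf.comp_sub_left 1
  refine h.congr (ae_of_all _ fun x => ?_)
  exact reflect_indicator f x

lemma betaFn_pos {a b : ℝ} (ha : 0 < a) (hb : 0 < b) : 0 < betaFn a b := by
  unfold betaFn
  have := Real.Gamma_pos_of_pos ha
  have := Real.Gamma_pos_of_pos hb
  have := Real.Gamma_pos_of_pos (show (0:ℝ) < a + b by linarith)
  positivity

lemma betaFn_succ_left {a b : ℝ} (ha : 0 < a) (hb : 0 < b) :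
    betaFn (a + 1) b = (a / (a + b)) * betaFn a b := by
  have hab : (0:ℝ) < a + b := by linarith
  unfold betaFn
  rw [Real.Gamma_add_one ha.ne', show a + 1 + b = (a + b) + 1 by ring,
    Real.Gamma_add_one hab.ne']
  have h1 := (Real.Gamma_pos_of_pos hab).ne'
  field_simp

/-- The expected binary entropy of a `Beta(a,b)` random variable equals
`ψ₀(a+b+1) − (a/(a+b)) ψ₀(a+1) − (b/(a+b)) ψ₀(b+1)`. -/
theorem beta_expected_binary_entropy (a b : ℝ) (ha : 0 < a) (hb : 0 < b) :
    (1 / betaFn a b) *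
        ∫ x in Set.Ioo (0 : ℝ) 1,
          (-(x * Real.log x) - (1 - x) * Real.log (1 - x)) * (x ^ (a - 1) * (1 - x) ^ (b - 1))
      = digamma (a + b + 1) - (a / (a + b)) * digamma (a + 1)
          - (b / (a + b)) * digamma (b + 1) := by
  have ha1 : (0:ℝ) < a + 1 := by linarith
  have hb1 : (0:ℝ) < b + 1 := by linarith
  have hab : (0:ℝ) < a + b := by linarith
  -- the two log-weighted integrands
  set g₁ : ℝ → ℝ := fun x => Real.log x * (x ^ (a + 1 - 1) * (1 - x) ^ (b - 1)) with hg₁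
  set g₂ : ℝ → ℝ := fun x => Real.log x * (x ^ (b + 1 - 1) * (1 - x) ^ (a - 1)) with hg₂
  have hint₁ : IntegrableOn g₁ (Set.Ioo 0 1) := (hasDerivAt_betaIntegral ha1 hb).1
  have hint₂ : IntegrableOn g₂ (Set.Ioo 0 1) := (hasDerivAt_betaIntegral hb1 ha).1
  have hint₂r : IntegrableOn (fun x => g₂ (1 - x)) (Set.Ioo 0 1) := integrableOn_reflect hint₂
  -- pointwise rewriting of the integrand on `Ioo 0 1`
  have hpt : ∀ x ∈ Set.Ioo (0:ℝ) 1,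
      (-(x * Real.log x) - (1 - x) * Real.log (1 - x)) * (x ^ (a - 1) * (1 - x) ^ (b - 1))
        = -g₁ x - g₂ (1 - x) := by
    intro x hx
    obtain ⟨hx0, hx1⟩ := hx
    have h1x : (0:ℝ) < 1 - x := by linarith
    simp only [hg₁, hg₂]
    rw [show a + 1 - 1 = (a - 1) + 1 by ring, show b + 1 - 1 = (b - 1) + 1 by ring,
      Real.rpow_add_one hx0.ne', Real.rpow_add_one h1x.ne']
    have : (1:ℝ) - (1 - x) = x := by ring
    rw [this]
    ring
  rw [setIntegral_congr_fun measurableSet_Ioo hpt]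
  have hsub := integral_sub hint₁.neg hint₂r
  simp only [Pi.neg_apply] at hsub
  rw [hsub, integral_neg]
  rw [integral_reflect g₂]
  rw [hg₁, hg₂, logBeta_integral_eq ha1 hb, logBeta_integral_eq hb1 ha]
  rw [betaFn_succ_left ha hb, show betaFn (b + 1) a = (b / (a + b)) * betaFn b a from by
      have := betaFn_succ_left hb ha; rwa [show b + a = a + b by ring] at this]
  have hBsymm : betaFn b a = betaFn a b := by unfold betaFn; rw [show b + a = a + b by ring]; ring
  rw [hBsymm, show a + 1 + b = a + b + 1 by ring, show b + 1 + a = a + b + 1 by ring]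
  have hB := (betaFn_pos ha hb).ne'
  field_simp
  ring
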